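/- For every integer n ≥ 1, if H is a graph on m = 2^(2^(4n)) vertices satisfying property 𝒫, then H ⟶ (Kₙ)^Δ: every 2-coloring of the triangles of H yields a copy of the complete graph Kₙ all of whose triangles receive the same color. -/

import Mathlib

open Finset
open scoped Classical

/-- `P(X,Y)`: the number of unordered pairs `{x,y}` with `x ≠ y`, `x ∈ X`, `y ∈ Y`. -/
noncomputable def pairCount {V : Type*} (X Y : Finset V) : ℕ :=
  (((X ×ˢ Y).filter fun p => p.1 ≠ p.2).image fun p => ({p.1, p.2} : Finset V)).card

/-- `e(X,Y)`: the number of edges `{x,y}` of `G` with `x ∈ X` and `y ∈ Y`. -/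
noncomputable def edgeCount {V : Type*} (G : SimpleGraph V) (X Y : Finset V) : ℕ :=
  (((X ×ˢ Y).filter fun p => G.Adj p.1 p.2).image fun p => ({p.1, p.2} : Finset V)).card

/-- Property 𝒫: for all `X, Y` of size at least `√t` (where `t` is the number of
vertices), `|e(X,Y)/P(X,Y) − 1/2| < t^(−1/8)`. -/
def PropertyP {V : Type*} [Fintype V] (G : SimpleGraph V) : Prop :=
  ∀ X Y : Finset V,
    Real.sqrt (Fintype.card V) ≤ X.card → Real.sqrt (Fintype.card V) ≤ Y.card →
    |(edgeCount G X Y : ℝ) / (pairCount X Y : ℝ) - 1 / 2| <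
      (Fintype.card V : ℝ) ^ (-(1 / 8 : ℝ))

/-- `H ⟶ (Kₙ)^Δ`: every 2-coloring of the triangles of `H` yields a copy of `Kₙ`
(a clique on `n` vertices) all of whose triangles receive the same color. -/
def ArrowKnTri {V : Type*} (H : SimpleGraph V) (n : ℕ) : Prop :=
  ∀ χ : Finset V → Bool, ∃ (K : Finset V) (c : Bool), H.IsNClique n K ∧
    ∀ t ⊆ K, H.IsNClique 3 t → χ t = c

lemma pairCount_self {V : Type*} (S : Finset V) : pairCount S S = S.card.choose 2 := by
  have himg : (((S ×ˢ S).filter fun p => p.1 ≠ p.2).image fun p => ({p.1, p.2} : Finset V))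
      = S.powersetCard 2 := by
    ext e
    simp only [mem_image, mem_filter, mem_product, mem_powersetCard]
    constructor
    · rintro ⟨⟨a, b⟩, ⟨⟨ha, hb⟩, hne⟩, rfl⟩
      refine ⟨?_, Finset.card_pair hne⟩
      intro x hx
      simp only [mem_insert, mem_singleton] at hx
      rcases hx with rfl | rfl <;> assumption
    · rintro ⟨hsub, hcard⟩
      obtain ⟨a, b, hne, rfl⟩ := Finset.card_eq_two.1 hcard
      exact ⟨(a, b), ⟨⟨hsub (by simp), hsub (by simp)⟩, hne⟩, rfl⟩
  rw [pairCount, himg, Finset.card_powersetCard]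

lemma edgeCount_le_sum {V : Type*} (G : SimpleGraph V) (S : Finset V) :
    edgeCount G S S ≤ ∑ a ∈ S, (S.filter fun b => G.Adj a b).card := by
  have h1 : edgeCount G S S ≤ ((S ×ˢ S).filter fun p => G.Adj p.1 p.2).card :=
    Finset.card_image_le
  have h2 : ((S ×ˢ S).filter fun p => G.Adj p.1 p.2).card
      = ∑ a ∈ S, (S.filter fun b => G.Adj a b).card := by
    rw [Finset.card_eq_sum_card_fiberwise (f := Prod.fst) (t := S)
      (fun p hp => by
        simp only [mem_coe, mem_filter, mem_product] at hp
        exact hp.1.1)]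
    refine Finset.sum_congr rfl fun a ha => ?_
    refine Finset.card_bij (fun p _ => p.2) ?_ ?_ ?_
    · intro p hp
      simp only [mem_filter, mem_product] at hp ⊢
      exact ⟨hp.1.1.2, hp.2 ▸ hp.1.2⟩
    · intro p hp q hq hpq
      simp only [mem_filter, mem_product] at hp hq
      exact Prod.ext (hp.2.trans hq.2.symm) hpq
    · intro b hb
      simp only [mem_filter, mem_product] at hb ⊢
      exact ⟨(a, b), ⟨⟨⟨ha, hb.1⟩, hb.2⟩, rfl⟩, rfl⟩
  omega

lemma exists_big_fiber {V α : Type*} [Fintype α] [Nonempty α] (S : Finset V) (f : V → α) :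
    ∃ (z : α) (T : Finset V), T ⊆ S ∧ (∀ w ∈ T, f w = z) ∧
      S.card ≤ Fintype.card α * T.card := by
  obtain ⟨z, _, hz⟩ := Finset.exists_max_image Finset.univ
    (fun z => (S.filter fun w => f w = z).card) Finset.univ_nonempty
  refine ⟨z, S.filter fun w => f w = z, Finset.filter_subset _ _,
    fun w hw => (Finset.mem_filter.mp hw).2, ?_⟩
  calc S.card = ∑ y : α, (S.filter fun w => f w = y).card :=
        Finset.card_eq_sum_card_fiberwise (fun x _ => Finset.mem_univ (f x))
    _ ≤ ∑ _y : α, (S.filter fun w => f w = z).card :=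
        Finset.sum_le_sum fun y _ => hz y (Finset.mem_univ y)
    _ = Fintype.card α * (S.filter fun w => f w = z).card := by
        rw [Finset.sum_const, Finset.card_univ, smul_eq_mul]

lemma choose_le_two_pow (k j : ℕ) : k.choose j ≤ 2 ^ k := by
  by_cases h : j ≤ k
  · calc k.choose j ≤ ∑ i ∈ Finset.range (k + 1), k.choose i :=
        Finset.single_le_sum (fun i _ => Nat.zero_le _) (Finset.mem_range.mpr (by omega))
      _ = 2 ^ k := Nat.sum_range_choose k
  · rw [Nat.choose_eq_zero_of_lt (by omega)]; exact Nat.zero_le _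

lemma exists_sorted_three (J : Finset ℕ) (h : J.card = 3) :
    ∃ a b c : ℕ, a < b ∧ b < c ∧ J = {a, b, c} := by
  obtain ⟨x, y, z, hxy, hxz, hyz, rfl⟩ := Finset.card_eq_three.mp h
  rcases hxy.lt_or_gt with h1 | h1 <;> rcases hxz.lt_or_gt with h2 | h2 <;>
    rcases hyz.lt_or_gt with h3 | h3
  · exact ⟨x, y, z, h1, h3, rfl⟩
  · exact ⟨x, z, y, h2, h3, by ext w; simp; tauto⟩
  · omega
  · exact ⟨z, x, y, h2, h1, by ext w; simp; tauto⟩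
  · exact ⟨y, x, z, h1, h2, by ext w; simp; tauto⟩
  · omega
  · exact ⟨y, z, x, h3, h2, by ext w; simp; tauto⟩
  · exact ⟨z, y, x, h3, h1, by ext w; simp; tauto⟩

lemma my_ramsey : ∀ (N a b : ℕ) (c : ℕ → ℕ → Bool) (S : Finset ℕ), a + b ≤ N →
    (a + b).choose a ≤ S.card →
    ∃ T, T ⊆ S ∧ ((T.card = a + 1 ∧ ∀ i ∈ T, ∀ j ∈ T, i < j → c i j = true) ∨
                   (T.card = b + 1 ∧ ∀ i ∈ T, ∀ j ∈ T, i < j → c i j = false)) := by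
  intro N
  induction N with
  | zero =>
    intro a b c S hab hS
    have ha : a = 0 := by omega
    have hb : b = 0 := by omega
    subst ha; subst hb
    obtain ⟨x, hx⟩ := Finset.card_pos.mp
      (lt_of_lt_of_le (Nat.choose_pos (Nat.zero_le _)) hS)
    refine ⟨{x}, Finset.singleton_subset_iff.mpr hx, Or.inl ⟨Finset.card_singleton x, ?_⟩⟩
    intro i hi j hj hij
    rw [Finset.mem_singleton] at hi hj
    omega
  | succ N ih =>
    intro a b c S hab hS
    -- trivial cases a = 0 or b = 0
    rcases Nat.eq_zero_or_pos a with rfl | hapos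
    · obtain ⟨x, hx⟩ := Finset.card_pos.mp
        (lt_of_lt_of_le (Nat.choose_pos (Nat.zero_le _)) hS)
      refine ⟨{x}, Finset.singleton_subset_iff.mpr hx, Or.inl ⟨Finset.card_singleton x, ?_⟩⟩
      intro i hi j hj hij
      rw [Finset.mem_singleton] at hi hj; omega
    rcases Nat.eq_zero_or_pos b with rfl | hbpos
    · obtain ⟨x, hx⟩ := Finset.card_pos.mp
        (lt_of_lt_of_le (Nat.choose_pos (by omega)) hS)
      refine ⟨{x}, Finset.singleton_subset_iff.mpr hx, Or.inr ⟨Finset.card_singleton x, ?_⟩⟩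
      intro i hi j hj hij
      rw [Finset.mem_singleton] at hi hj; omega
    obtain ⟨a', rfl⟩ : ∃ a', a = a' + 1 := ⟨a - 1, by omega⟩
    obtain ⟨b', rfl⟩ : ∃ b', b = b' + 1 := ⟨b - 1, by omega⟩
    -- Pascal
    have hpascal : (a' + 1 + (b' + 1)).choose (a' + 1)
        = (a' + (b' + 1)).choose a' + (a' + 1 + b').choose (a' + 1) := by
      have h1 : a' + 1 + (b' + 1) = (a' + b' + 1) + 1 := by omega
      rw [h1, Nat.choose_succ_succ]
      congr 2 <;> omega
    have hSne : S.Nonempty := Finset.card_pos.mp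
      (lt_of_lt_of_le (Nat.choose_pos (by omega)) hS)
    set x := S.min' hSne with hxdef
    have hxS : x ∈ S := S.min'_mem hSne
    set St := (S.erase x).filter (fun j => c x j = true) with hStdef
    set Sf := (S.erase x).filter (fun j => ¬ (c x j = true)) with hSfdef
    have hsplit : St.card + Sf.card = S.card - 1 := by
      rw [hStdef, hSfdef, Finset.card_filter_add_card_filter_not,
        Finset.card_erase_of_mem hxS]
    have hcase : (a' + (b' + 1)).choose a' ≤ St.card
        ∨ (a' + 1 + b').choose (a' + 1) ≤ Sf.card := by omega
    have hxlt : ∀ j ∈ S.erase x, x < j := by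
      intro j hj
      have := S.min'_le j (Finset.mem_of_mem_erase hj)
      have := Finset.ne_of_mem_erase hj
      omega
    rcases hcase with hc1 | hc1
    · obtain ⟨T', hT'sub, hT'⟩ := ih a' (b' + 1) c St (by omega) hc1
      have hT'S : T' ⊆ S := hT'sub.trans ((Finset.filter_subset _ _).trans (Finset.erase_subset _ _))
      rcases hT' with ⟨hcard, hmono⟩ | ⟨hcard, hmono⟩
      · refine ⟨insert x T', Finset.insert_subset hxS hT'S, Or.inl ⟨?_, ?_⟩⟩
        · rw [Finset.card_insert_of_notMem, hcard]
          intro hxT'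
          exact absurd rfl (Finset.ne_of_mem_erase (Finset.mem_of_mem_filter _ (hT'sub hxT')))
        · intro i hi j hj hij
          rcases Finset.mem_insert.mp hj with rfl | hjT'
          · rcases Finset.mem_insert.mp hi with rfl | hiT'
            · omega
            · exact absurd (hxlt i (Finset.mem_of_mem_filter _ (hT'sub hiT'))) (by omega)
          · rcases Finset.mem_insert.mp hi with rfl | hiT'
            · exact (Finset.mem_filter.mp (hT'sub hjT')).2
            · exact hmono i hiT' j hjT' hij
      · exact ⟨T', hT'S, Or.inr ⟨hcard, hmono⟩⟩
    · obtain ⟨T', hT'sub, hT'⟩ := ih (a' + 1) b' (fun i j => c i j) Sf (by omega) hc1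
      have hT'S : T' ⊆ S := hT'sub.trans ((Finset.filter_subset _ _).trans (Finset.erase_subset _ _))
      rcases hT' with ⟨hcard, hmono⟩ | ⟨hcard, hmono⟩
      · exact ⟨T', hT'S, Or.inl ⟨hcard, hmono⟩⟩
      · refine ⟨insert x T', Finset.insert_subset hxS hT'S, Or.inr ⟨?_, ?_⟩⟩
        · rw [Finset.card_insert_of_notMem, hcard]
          intro hxT'
          exact absurd rfl (Finset.ne_of_mem_erase (Finset.mem_of_mem_filter _ (hT'sub hxT')))
        · intro i hi j hj hij
          rcases Finset.mem_insert.mp hj with rfl | hjT'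
          · rcases Finset.mem_insert.mp hi with rfl | hiT'
            · omega
            · exact absurd (hxlt i (Finset.mem_of_mem_filter _ (hT'sub hiT'))) (by omega)
          · rcases Finset.mem_insert.mp hi with rfl | hiT'
            · have := (Finset.mem_filter.mp (hT'sub hjT')).2
              simp only [Bool.not_eq_true] at this
              exact this
            · exact hmono i hiT' j hjT' hij

/-- The greedy construction: in a pseudorandom graph we can find a clique
`v 0, …, v (m-1)` such that triangle colors only depend on the two lowest indices. -/
lemma greedy_main {V : Type*} [Fintype V] [Nonempty V] (H : SimpleGraph V)
    (hP : PropertyP H) (χ : Finset V → Bool) (m E : ℕ) (hm1 : 1 ≤ m) (hE1 : 1 ≤ E)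
    (hcardV : Fintype.card V = 2 ^ E * 2 ^ E)
    (hmE : ∀ i, i ≤ m → (m + 3) * i ≤ E)
    (heps : (Fintype.card V : ℝ) ^ (-(1 / 8 : ℝ)) ≤ 1 / 4) :
    ∃ (v : ℕ → V) (g : ℕ → ℕ → Bool),
      (∀ j k, j < k → k < m → H.Adj (v j) (v k)) ∧
      (∀ j k l, j < k → k < l → l < m → χ {v j, v k, v l} = g j k) := by
  have main : ∀ i, i ≤ m → ∃ (v : ℕ → V) (g : ℕ → ℕ → Bool) (S : Finset V),
      (Fintype.card V ≤ 2 ^ ((m + 3) * i) * S.card) ∧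
      (∀ j k, j < k → k < i → H.Adj (v j) (v k)) ∧
      (∀ j, j < i → ∀ w ∈ S, H.Adj (v j) w) ∧
      (∀ j k, j < k → k < i → ∀ w ∈ S, χ {v j, v k, w} = g j k) ∧
      (∀ j k l, j < k → k < l → l < i → χ {v j, v k, v l} = g j k) := by
    intro i
    induction i with
    | zero =>
      intro _
      refine ⟨fun _ => Classical.arbitrary V, fun _ _ => true, Finset.univ, ?_, ?_, ?_, ?_, ?_⟩
      · simp [Finset.card_univ]
      all_goals intros; omega
    | succ i ih =>
      intro hi1
      obtain ⟨v, g, S, hcard, hadj, hvadj, hcol, htri⟩ := ih (by omega)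
      -- S is large
      have hsS : 2 ^ E ≤ S.card := by
        have h1 : 2 ^ E * 2 ^ E ≤ 2 ^ E * S.card := by
          calc 2 ^ E * 2 ^ E = Fintype.card V := hcardV.symm
            _ ≤ 2 ^ ((m + 3) * i) * S.card := hcard
            _ ≤ 2 ^ E * S.card :=
              Nat.mul_le_mul_right _ (Nat.pow_le_pow_right (by omega) (hmE i (by omega)))
        exact Nat.le_of_mul_le_mul_left h1 (Nat.pow_pos (by omega))
      have hS2 : 2 ≤ S.card :=
        le_trans (by calc (2:ℕ) = 2 ^ 1 := by norm_num
                      _ ≤ 2 ^ E := Nat.pow_le_pow_right (by omega) hE1) hsS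
      -- apply the pseudorandomness property
      have hsqrt : Real.sqrt (Fintype.card V) ≤ (S.card : ℝ) := by
        have h1 : (Fintype.card V : ℝ) = ((2 ^ E : ℕ) : ℝ) ^ 2 := by
          rw [hcardV]; push_cast; ring
        rw [h1, Real.sqrt_sq (by positivity)]
        exact_mod_cast hsS
      have hprop := hP S S hsqrt hsqrt
      -- extract: pairCount ≤ 4 * edgeCount
      have hpc : pairCount S S = S.card.choose 2 := pairCount_self S
      have hPpos : 0 < pairCount S S := by
        rw [hpc]; exact Nat.choose_pos hS2
      have hPposR : (0 : ℝ) < (pairCount S S : ℝ) := by exact_mod_cast hPpos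
      have habs := abs_lt.mp hprop
      have hquarter : (1 / 4 : ℝ) < (edgeCount H S S : ℝ) / (pairCount S S : ℝ) := by
        have := habs.1
        linarith
      have hPe : (pairCount S S : ℝ) < 4 * (edgeCount H S S : ℝ) := by
        have := (lt_div_iff₀ hPposR).mp hquarter
        linarith
      -- max degree vertex
      obtain ⟨a, haS, hamax⟩ := Finset.exists_max_image S
        (fun a => (S.filter fun b => H.Adj a b).card) (Finset.card_pos.mp (by omega))
      have hsum : ∑ x ∈ S, (S.filter fun b => H.Adj x b).card
          ≤ S.card * (S.filter fun b => H.Adj a b).card := by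
        calc ∑ x ∈ S, (S.filter fun b => H.Adj x b).card
            ≤ S.card • (S.filter fun b => H.Adj a b).card :=
              Finset.sum_le_card_nsmul S _ _ (fun x hx => hamax x hx)
          _ = S.card * (S.filter fun b => H.Adj a b).card := by rw [smul_eq_mul]
      have hesum := edgeCount_le_sum H S
      -- real arithmetic: S.card ≤ 16 * d
      have hchoose2 : (pairCount S S : ℝ) = (S.card : ℝ) * ((S.card : ℝ) - 1) / 2 := by
        rw [hpc]; exact_mod_cast Nat.cast_choose_two (S.card) (K := ℝ)
      have hd16 : S.card ≤ 16 * (S.filter fun b => H.Adj a b).card := by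
        set d := (S.filter fun b => H.Adj a b).card
        have hc1 : (2 : ℝ) ≤ (S.card : ℝ) := by exact_mod_cast hS2
        have he1 : (edgeCount H S S : ℝ) ≤ (S.card : ℝ) * d := by
          exact_mod_cast le_trans hesum hsum
        have hcpos : (0 : ℝ) < (S.card : ℝ) := by linarith
        have h8 : (S.card : ℝ) - 1 ≤ 8 * d := by nlinarith
        have h16 : (S.card : ℝ) ≤ 16 * (d : ℝ) := by nlinarith
        exact_mod_cast h16
      -- pigeonhole on the colors towards previously chosen vertices
      obtain ⟨z, S', hS'sub, hS'val, hz⟩ := exists_big_fiber (S.filter fun b => H.Adj a b)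
        (fun w => (fun j : Fin i => χ {v j.1, a, w}))
      rw [show Fintype.card (Fin i → Bool) = 2 ^ i by simp] at hz
      have hv'lt : ∀ j, j < i → Function.update v i a j = v j :=
        fun j hj => Function.update_of_ne (by omega) _ _
      have hv'i : Function.update v i a i = a := Function.update_self _ _ _
      have hS'S : S' ⊆ S := hS'sub.trans (Finset.filter_subset _ _)
      have hS'adj : ∀ w ∈ S', H.Adj a w :=
        fun w hw => (Finset.mem_filter.mp (hS'sub hw)).2
      have hS'col : ∀ w ∈ S', ∀ j (hj : j < i), χ {v j, a, w} = z ⟨j, hj⟩ :=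
        fun w hw j hj => congrFun (hS'val w hw) ⟨j, hj⟩
      refine ⟨Function.update v i a,
        (fun j k => if k = i then (if hj : j < i then z ⟨j, hj⟩ else true) else g j k),
        S', ?_, ?_, ?_, ?_, ?_⟩
      · -- cardinality
        have hstep : 2 ^ ((m + 3) * i) * 2 ^ (i + 4) ≤ 2 ^ ((m + 3) * (i + 1)) := by
          rw [← pow_add]
          exact Nat.pow_le_pow_right (by omega) (by nlinarith)
        calc Fintype.card V ≤ 2 ^ ((m + 3) * i) * S.card := hcard
          _ ≤ 2 ^ ((m + 3) * i) * (16 * (S.filter fun b => H.Adj a b).card) :=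
              Nat.mul_le_mul_left _ hd16
          _ ≤ 2 ^ ((m + 3) * i) * (16 * (2 ^ i * S'.card)) :=
              Nat.mul_le_mul_left _ (Nat.mul_le_mul_left _ hz)
          _ = 2 ^ ((m + 3) * i) * 2 ^ (i + 4) * S'.card := by
              rw [pow_add]; ring
          _ ≤ 2 ^ ((m + 3) * (i + 1)) * S'.card := Nat.mul_le_mul_right _ hstep
      · -- pairwise adjacency
        intro j k hjk hk
        rcases Nat.lt_or_ge k i with hki | hki
        · rw [hv'lt j (by omega), hv'lt k hki]
          exact hadj j k hjk hki
        · have hki' : k = i := by omega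
          subst hki'
          rw [hv'lt j hjk, hv'i]
          exact hvadj j hjk a haS
      · -- adjacency to the candidate set
        intro j hj w hw
        rcases Nat.lt_or_ge j i with hji | hji
        · rw [hv'lt j hji]
          exact hvadj j hji w (hS'S hw)
        · have hji' : j = i := by omega
          subst hji'
          rw [hv'i]
          exact hS'adj w hw
      · -- colors towards candidate set
        intro j k hjk hk w hw
        rcases Nat.lt_or_ge k i with hki | hki
        · rw [hv'lt j (by omega), hv'lt k hki]
          dsimp only
          rw [if_neg (show ¬ (k = i) by omega)]
          exact hcol j k hjk hki w (hS'S hw)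
        · have hki' : k = i := by omega
          subst hki'
          rw [hv'lt j hjk, hv'i]
          dsimp only
          rw [if_pos rfl, dif_pos hjk]
          exact hS'col w hw j hjk
      · -- colors among chosen vertices
        intro j k l hjk hkl hl
        rcases Nat.lt_or_ge l i with hli | hli
        · rw [hv'lt j (by omega), hv'lt k (by omega), hv'lt l hli]
          dsimp only
          rw [if_neg (show ¬ (k = i) by omega)]
          exact htri j k l hjk hkl hli
        · have hli' : l = i := by omega
          subst hli'
          rw [hv'lt j (by omega), hv'lt k hkl, hv'i]
          dsimp only
          rw [if_neg (by omega : ¬ (k = l))]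
          exact hcol j k hjk hkl a haS
  obtain ⟨v, g, S, _, hadj, _, _, htri⟩ := main m le_rfl
  exact ⟨v, g, hadj, htri⟩

theorem stmt4 (n : ℕ) (hn : 1 ≤ n) (H : SimpleGraph (Fin (2 ^ 2 ^ (4 * n))))
    (hP : PropertyP H) : ArrowKnTri H n := by
  intro χ
  obtain ⟨p, rfl⟩ : ∃ p, n = p + 1 := ⟨n - 1, by omega⟩
  haveI : Nonempty (Fin (2 ^ 2 ^ (4 * (p + 1)))) := ⟨⟨0, by positivity⟩⟩
  -- numeric setup
  have hm1 : 1 ≤ (p + p).choose p := Nat.choose_pos (by omega)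
  have hm2 : (p + p).choose p ≤ 2 ^ (2 * p) := by
    calc (p + p).choose p ≤ 2 ^ (p + p) := choose_le_two_pow (p + p) p
      _ = 2 ^ (2 * p) := by rw [two_mul]
  set m := (p + p).choose p with hmdef
  have hE1 : 1 ≤ 2 ^ (4 * p + 3) := Nat.pow_pos (by omega)
  have hEsum : 2 ^ (4 * (p + 1)) = 2 ^ (4 * p + 3) + 2 ^ (4 * p + 3) := by
    rw [show 4 * (p + 1) = (4 * p + 3) + 1 from by omega, pow_succ]
    omega
  have hcardV : Fintype.card (Fin (2 ^ 2 ^ (4 * (p + 1))))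
      = 2 ^ (2 ^ (4 * p + 3)) * 2 ^ (2 ^ (4 * p + 3)) := by
    rw [Fintype.card_fin, ← pow_add, ← hEsum]
  have hmE : ∀ i, i ≤ m → (m + 3) * i ≤ 2 ^ (4 * p + 3) := by
    intro i hi
    calc (m + 3) * i ≤ (4 * m) * m := Nat.mul_le_mul (by omega) hi
      _ ≤ (4 * 2 ^ (2 * p)) * 2 ^ (2 * p) :=
          Nat.mul_le_mul (Nat.mul_le_mul (le_refl 4) hm2) hm2
      _ ≤ 2 ^ (4 * p + 3) := by
          rw [show (4 : ℕ) = 2 ^ 2 from by norm_num, ← pow_add, ← pow_add]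
          exact Nat.pow_le_pow_right (by omega) (by omega)
  have heps : ((Fintype.card (Fin (2 ^ 2 ^ (4 * (p + 1))))) : ℝ) ^ (-(1 / 8 : ℝ))
      ≤ 1 / 4 := by
    have hc2 : ((Fintype.card (Fin (2 ^ 2 ^ (4 * (p + 1))))) : ℝ)
        = (2 : ℝ) ^ (((2 ^ (4 * (p + 1)) : ℕ)) : ℝ) := by
      rw [Fintype.card_fin, Real.rpow_natCast]
      push_cast
      ring
    rw [hc2, ← Real.rpow_mul (by norm_num : (0:ℝ) ≤ 2)]
    rw [show (1 / 4 : ℝ) = (2 : ℝ) ^ ((-2 : ℝ)) from by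
      rw [show (-2 : ℝ) = ((-2 : ℤ) : ℝ) from by norm_num, Real.rpow_intCast]
      norm_num]
    apply (Real.rpow_le_rpow_left_iff (by norm_num : (1:ℝ) < 2)).mpr
    have h16 : (16 : ℝ) ≤ (((2 ^ (4 * (p + 1)) : ℕ)) : ℝ) := by
      have : (16 : ℕ) ≤ 2 ^ (4 * (p + 1)) := by
        calc (16 : ℕ) = 2 ^ 4 := by norm_num
          _ ≤ 2 ^ (4 * (p + 1)) := Nat.pow_le_pow_right (by omega) (by omega)
      exact_mod_cast this
    nlinarith
  -- run the greedy construction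
  obtain ⟨v, g, hadj, htri⟩ := greedy_main H hP χ m (2 ^ (4 * p + 3)) hm1 hE1 hcardV hmE heps
  have hTm' : ∀ j k, j < m → k < m → j ≠ k → v j ≠ v k := by
    intro j k hj hk hne
    rcases hne.lt_or_gt with h | h
    · exact (hadj j k h hk).ne
    · exact (hadj k j h hj).ne'
  -- apply Ramsey
  obtain ⟨T, hTsub, hT⟩ := my_ramsey (p + p) p p g (Finset.range m) le_rfl
    (by rw [Finset.card_range])
  have hcases : ∃ c : Bool, T.card = p + 1 ∧ ∀ i ∈ T, ∀ j ∈ T, i < j → g i j = c := by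
    rcases hT with ⟨h1, h2⟩ | ⟨h1, h2⟩
    exacts [⟨true, h1, h2⟩, ⟨false, h1, h2⟩]
  obtain ⟨c, hTcard, hmono⟩ := hcases
  have hTm : ∀ j ∈ T, j < m := fun j hj => Finset.mem_range.mp (hTsub hj)
  have hinj : Set.InjOn v ↑T := by
    intro x hx y hy hxy
    by_contra hne
    exact hTm' x y (hTm x (Finset.mem_coe.mp hx)) (hTm y (Finset.mem_coe.mp hy)) hne hxy
  refine ⟨T.image v, c, ?_, ?_⟩
  · rw [SimpleGraph.isNClique_iff]
    constructor
    · rw [SimpleGraph.isClique_iff]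
      intro x hx y hy hxy
      obtain ⟨j, hjT, rfl⟩ := Finset.mem_image.mp (Finset.mem_coe.mp hx)
      obtain ⟨k, hkT, rfl⟩ := Finset.mem_image.mp (Finset.mem_coe.mp hy)
      have hjk : j ≠ k := fun h => hxy (by rw [h])
      rcases hjk.lt_or_gt with h | h
      · exact hadj j k h (hTm k hkT)
      · exact (hadj k j h (hTm j hjT)).symm
    · rw [Finset.card_image_of_injOn hinj, hTcard]
  · intro tri htrisub htri3
    have htricard : tri.card = 3 := htri3.card_eq
    have hJT : T.filter (fun j => v j ∈ tri) ⊆ T := Finset.filter_subset _ _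
    have himg : (T.filter (fun j => v j ∈ tri)).image v = tri := by
      apply Finset.Subset.antisymm
      · intro x hx
        obtain ⟨j, hj, rfl⟩ := Finset.mem_image.mp hx
        exact (Finset.mem_filter.mp hj).2
      · intro x hx
        obtain ⟨j, hjT, rfl⟩ := Finset.mem_image.mp (htrisub hx)
        exact Finset.mem_image.mpr ⟨j, Finset.mem_filter.mpr ⟨hjT, hx⟩, rfl⟩
    have hJcard : (T.filter (fun j => v j ∈ tri)).card = 3 := by
      have h1 : ((T.filter (fun j => v j ∈ tri)).image v).card
          = (T.filter (fun j => v j ∈ tri)).card :=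
        Finset.card_image_of_injOn (hinj.mono (Finset.coe_subset.mpr hJT))
      rw [himg, htricard] at h1
      omega
    obtain ⟨x, y, z, hxy, hyz, hJ⟩ := exists_sorted_three _ hJcard
    have hxT : x ∈ T := hJT (hJ ▸ (by simp : x ∈ ({x, y, z} : Finset ℕ)))
    have hyT : y ∈ T := hJT (hJ ▸ (by simp : y ∈ ({x, y, z} : Finset ℕ)))
    have hzT : z ∈ T := hJT (hJ ▸ (by simp : z ∈ ({x, y, z} : Finset ℕ)))
    have htrieq : tri = {v x, v y, v z} := by
      rw [← himg, hJ]
      simp [Finset.image_insert, Finset.image_singleton]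
    rw [htrieq]
    convert (htri x y z hxy hyz (hTm z hzT)).trans (hmono x hxT y hyT hxy) using 2
    ext w
    simp
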